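/- Let 1 ≤ K ≤ D be integers, let W_1,…,W_D and V be finitely-valued random variables on a common probability space, and let Q be the set of all injective tuples d = (d_1,…,d_K) ∈ {1,…,D}^K. Then Σ_{d∈Q} H(W_{d_1},…,W_{d_K} | V) ≥ (K/D) · K! · C(D,K) · H(W_1,…,W_D | V). -/

import Mathlib

open MeasureTheory ProbabilityTheory

/-- Shannon entropy (natural-log base) of a finitely-valued random variable. -/
noncomputable def Hent {Ω S : Type*} [MeasurableSpace Ω] [Fintype S]
    (μ : Measure Ω) (X : Ω → S) : ℝ :=
  ∑ s : S, Real.negMulLog (μ (X ⁻¹' {s})).toReal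

/-- Conditional entropy `H(X|Y) = H(X,Y) − H(Y)`. -/
noncomputable def condHent {Ω S T : Type*} [MeasurableSpace Ω] [Fintype S] [Fintype T]
    (μ : Measure Ω) (X : Ω → S) (Y : Ω → T) : ℝ :=
  Hent μ (fun ω => (X ω, Y ω)) - Hent μ Y

section HanAux
open Real Finset
set_option linter.unusedSectionVars false

lemma negMulLog_sum_le {ι : Type*} (s : Finset ι) (a : ι → ℝ) (ha : ∀ i ∈ s, 0 ≤ a i) :
    Real.negMulLog (∑ i ∈ s, a i) ≤ ∑ i ∈ s, Real.negMulLog (a i) := by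
  rw [Real.negMulLog, neg_mul, Finset.sum_mul, ← Finset.sum_neg_distrib]
  refine Finset.sum_le_sum (fun i hi => ?_)
  rcases eq_or_lt_of_le (ha i hi) with h0 | h0
  · simp [Real.negMulLog, ← h0]
  · have hle : a i ≤ ∑ j ∈ s, a j := Finset.single_le_sum ha hi
    have := Real.log_le_log h0 hle
    rw [Real.negMulLog, neg_mul]
    nlinarith

private lemma neg_sum_mul {ι : Type*} (s : Finset ι) (g : ι → ℝ) (L : ℝ) :
    -((∑ i ∈ s, g i) * L) = ∑ i ∈ s, -g i * L := by
  rw [Finset.sum_mul, ← Finset.sum_neg_distrib]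
  exact Finset.sum_congr rfl fun i _ => by ring

lemma submod_real {A B C : Type*} [Fintype A] [Fintype B] [Fintype C]
    (p : A → B → C → ℝ) (hp : ∀ a b c, 0 ≤ p a b c)
    (hsum : ∑ a, ∑ b, ∑ c, p a b c = 1) :
    (∑ a, ∑ b, ∑ c, negMulLog (p a b c)) + (∑ b, negMulLog (∑ a, ∑ c, p a b c)) ≤
      (∑ a, ∑ b, negMulLog (∑ c, p a b c)) + (∑ b, ∑ c, negMulLog (∑ a, p a b c)) := by
  classical
  set pXY : A → B → ℝ := fun a b => ∑ c, p a b c with hpXY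
  set pYZ : B → C → ℝ := fun b c => ∑ a, p a b c with hpYZ
  set pY : B → ℝ := fun b => ∑ a, ∑ c, p a b c with hpY
  have hpXY0 : ∀ a b, 0 ≤ pXY a b := fun a b => Finset.sum_nonneg fun c _ => hp a b c
  have hpYZ0 : ∀ b c, 0 ≤ pYZ b c := fun b c => Finset.sum_nonneg fun a _ => hp a b c
  have hpY0 : ∀ b, 0 ≤ pY b := fun b => Finset.sum_nonneg fun a _ => hpXY0 a b
  have hXYle : ∀ a b, pXY a b ≤ pY b := fun a b =>
    Finset.single_le_sum (fun a _ => hpXY0 a b) (Finset.mem_univ a)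
  have hYZeq : ∀ b, (∑ c, pYZ b c) = pY b := fun b => Finset.sum_comm
  -- rewrite entropies as triple sums
  have e1 : (∑ a, ∑ b, negMulLog (pXY a b)) = ∑ a, ∑ b, ∑ c, (-(p a b c) * log (pXY a b)) :=
    Finset.sum_congr rfl fun a _ => Finset.sum_congr rfl fun b _ => by
      rw [negMulLog, neg_mul]; exact neg_sum_mul _ _ _
  have e2 : (∑ b, ∑ c, negMulLog (pYZ b c)) = ∑ a, ∑ b, ∑ c, (-(p a b c) * log (pYZ b c)) := by
    rw [Finset.sum_comm (γ := A)]
    refine Finset.sum_congr rfl fun b _ => ?_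
    rw [Finset.sum_comm (γ := A)]
    refine Finset.sum_congr rfl fun c _ => ?_
    rw [negMulLog, neg_mul]; exact neg_sum_mul _ _ _
  have e3 : (∑ b, negMulLog (pY b)) = ∑ a, ∑ b, ∑ c, (-(p a b c) * log (pY b)) := by
    rw [Finset.sum_comm (γ := A)]
    refine Finset.sum_congr rfl fun b _ => ?_
    rw [negMulLog, neg_mul, show pY b * log (pY b) = ∑ a, ∑ c, p a b c * log (pY b) by
      rw [hpY, Finset.sum_mul]; exact Finset.sum_congr rfl fun a _ => Finset.sum_mul ..]
    rw [← Finset.sum_neg_distrib]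
    exact Finset.sum_congr rfl fun a _ => by
      rw [← Finset.sum_neg_distrib]; exact Finset.sum_congr rfl fun c _ => by ring
  rw [e1, e2, e3]
  -- q and its total
  set q : A → B → C → ℝ := fun a b c => pXY a b * pYZ b c / pY b with hq
  have hq0 : ∀ a b c, 0 ≤ q a b c := fun a b c =>
    div_nonneg (mul_nonneg (hpXY0 a b) (hpYZ0 b c)) (hpY0 b)
  have hqsum : ∑ a, ∑ b, ∑ c, q a b c = 1 := by
    have this1 : ∀ b, ∑ a, ∑ c, q a b c = pY b := by
      intro b
      have h1 : ∑ a, ∑ c, q a b c = (∑ a, pXY a b) * (∑ c, pYZ b c) / pY b := by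
        rw [Finset.sum_mul_sum, Finset.sum_div]
        exact Finset.sum_congr rfl fun a _ => by rw [Finset.sum_div]
      rw [h1, hYZeq]
      rcases eq_or_lt_of_le (hpY0 b) with h0 | h0
      · have h2 : ∑ a, pXY a b = 0 := h0.symm
        rw [h2, ← h0]; ring
      · have h2 : ∑ a, pXY a b = pY b := rfl
        rw [h2]; field_simp
    calc ∑ a, ∑ b, ∑ c, q a b c = ∑ b, ∑ a, ∑ c, q a b c := Finset.sum_comm
      _ = ∑ b, pY b := Finset.sum_congr rfl fun b _ => this1 b
      _ = ∑ b, ∑ a, ∑ c, p a b c := rfl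
      _ = ∑ a, ∑ b, ∑ c, p a b c := Finset.sum_comm
      _ = 1 := hsum
  -- termwise key inequality
  set t : A → B → C → ℝ := fun a b c => if p a b c = 0 then 0 else q a b c - p a b c with ht
  have htle : ∀ a b c, t a b c ≤ q a b c - p a b c := by
    intro a b c
    by_cases h : p a b c = 0
    · simp [ht, h, hq0 a b c]
    · simp [ht, h]
  have key : ∀ a b c, negMulLog (p a b c) + (-(p a b c) * log (pY b)) ≤
      (-(p a b c) * log (pXY a b)) + (-(p a b c) * log (pYZ b c)) + t a b c := by
    intro a b c
    rcases eq_or_lt_of_le (hp a b c) with h0 | h0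
    · simp [ht, ← h0, negMulLog]
    · have hXY : 0 < pXY a b := lt_of_lt_of_le h0 (Finset.single_le_sum (fun c _ => hp a b c) (Finset.mem_univ c))
      have hYZ : 0 < pYZ b c := lt_of_lt_of_le h0 (Finset.single_le_sum (fun a _ => hp a b c) (Finset.mem_univ a))
      have hY : 0 < pY b := lt_of_lt_of_le hXY (hXYle a b)
      have hqpos : 0 < q a b c := div_pos (mul_pos hXY hYZ) hY
      have hteq : t a b c = q a b c - p a b c := by simp [ht, ne_of_gt h0]
      have hlog : log (q a b c / p a b c) ≤ q a b c / p a b c - 1 :=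
        log_le_sub_one_of_pos (div_pos hqpos h0)
      rw [Real.log_div (ne_of_gt hqpos) (ne_of_gt h0), hq] at hlog
      simp only at hlog
      rw [Real.log_div (ne_of_gt (mul_pos hXY hYZ)) (ne_of_gt hY),
        Real.log_mul (ne_of_gt hXY) (ne_of_gt hYZ)] at hlog
      have h2 := mul_le_mul_of_nonneg_left hlog (le_of_lt h0)
      have h3 : p a b c * (q a b c / p a b c - 1) = q a b c - p a b c := by field_simp
      rw [h3] at h2
      have h4 : p a b c * (log (pXY a b) + log (pYZ b c) - log (pY b) - log (p a b c))
          = -(p a b c) * log (p a b c) + (-(p a b c) * log (pY b))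
            - ((-(p a b c) * log (pXY a b)) + (-(p a b c) * log (pYZ b c))) := by ring
      rw [h4] at h2
      rw [negMulLog, hteq]
      linarith
  calc (∑ a, ∑ b, ∑ c, negMulLog (p a b c)) + (∑ a, ∑ b, ∑ c, (-(p a b c) * log (pY b)))
      = ∑ a, ∑ b, ∑ c, (negMulLog (p a b c) + (-(p a b c) * log (pY b))) := by
        simp [Finset.sum_add_distrib]
    _ ≤ ∑ a, ∑ b, ∑ c, ((-(p a b c) * log (pXY a b)) + (-(p a b c) * log (pYZ b c)) + t a b c) :=
        Finset.sum_le_sum fun a _ => Finset.sum_le_sum fun b _ => Finset.sum_le_sum fun c _ => key a b c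
    _ = (∑ a, ∑ b, ∑ c, (-(p a b c) * log (pXY a b))) + (∑ a, ∑ b, ∑ c, (-(p a b c) * log (pYZ b c)))
        + (∑ a, ∑ b, ∑ c, t a b c) := by
        simp [Finset.sum_add_distrib]
    _ ≤ (∑ a, ∑ b, ∑ c, (-(p a b c) * log (pXY a b))) + (∑ a, ∑ b, ∑ c, (-(p a b c) * log (pYZ b c)))
        + (∑ a, ∑ b, ∑ c, (q a b c - p a b c)) := by
        refine add_le_add (le_refl _) ?_
        exact Finset.sum_le_sum fun a _ => Finset.sum_le_sum fun b _ => Finset.sum_le_sum fun c _ => htle a b c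
    _ = _ := by
        have : ∑ a, ∑ b, ∑ c, (q a b c - p a b c) = 0 := by
          simp only [Finset.sum_sub_distrib]
          rw [hqsum, hsum]; ring
        rw [this]; ring

-- (duplicate removed)


lemma meas_comp {Ω M N : Type*} [MeasurableSpace Ω] [Countable M] {J : Ω → M}
    (hJ : ∀ s, MeasurableSet (J ⁻¹' {s})) (φ : M → N) (n : N) :
    MeasurableSet ((fun ω => φ (J ω)) ⁻¹' {n}) := by
  have h : (fun ω => φ (J ω)) ⁻¹' {n} = ⋃ s ∈ φ ⁻¹' {n}, J ⁻¹' {s} := by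
    ext ω; simp
  rw [h]
  exact MeasurableSet.biUnion (Set.to_countable _) fun s _ => hJ s

lemma measure_comp_toReal {Ω A B : Type*} [MeasurableSpace Ω] [Fintype A] [DecidableEq B]
    (μ : Measure Ω) [IsFiniteMeasure μ] (X : Ω → A) (hX : ∀ s, MeasurableSet (X ⁻¹' {s}))
    (g : A → B) (b : B) :
    (μ ((fun ω => g (X ω)) ⁻¹' {b})).toReal
      = ∑ a ∈ Finset.univ.filter (fun a => g a = b), (μ (X ⁻¹' {a})).toReal := by
  have h : (fun ω => g (X ω)) ⁻¹' {b} = ⋃ a ∈ (Finset.univ.filter (fun a => g a = b) : Finset A), X ⁻¹' {a} := by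
    ext ω; simp
  rw [h, measure_biUnion_finset ?_ (fun a _ => hX a)]
  · exact ENNReal.toReal_sum fun a _ => measure_ne_top μ _
  · intro a _ a' _ hne
    simp only [Function.onFun]
    refine Set.disjoint_left.2 fun ω h1 h2 => hne ?_
    simp only [Set.mem_preimage, Set.mem_singleton_iff] at h1 h2
    rw [← h1, ← h2]

lemma hent_comp_le {Ω A B : Type*} [MeasurableSpace Ω] [Fintype A] [Fintype B]
    (μ : Measure Ω) [IsFiniteMeasure μ] (X : Ω → A) (hX : ∀ s, MeasurableSet (X ⁻¹' {s}))
    (g : A → B) : Hent μ (fun ω => g (X ω)) ≤ Hent μ X := by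
  classical
  calc Hent μ (fun ω => g (X ω))
      = ∑ b : B, negMulLog (∑ a ∈ Finset.univ.filter (fun a => g a = b), (μ (X ⁻¹' {a})).toReal) := by
        exact Finset.sum_congr rfl fun b _ => by rw [measure_comp_toReal μ X hX g b]
    _ ≤ ∑ b : B, ∑ a ∈ Finset.univ.filter (fun a => g a = b), negMulLog ((μ (X ⁻¹' {a})).toReal) :=
        Finset.sum_le_sum fun b _ => negMulLog_sum_le _ _ fun a _ => ENNReal.toReal_nonneg
    _ = ∑ a : A, negMulLog ((μ (X ⁻¹' {a})).toReal) := Finset.sum_fiberwise _ _ _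
    _ = Hent μ X := rfl

lemma hent_eq_of_comp {Ω A B : Type*} [MeasurableSpace Ω] [Fintype A] [Fintype B]
    (μ : Measure Ω) [IsFiniteMeasure μ] (X : Ω → A) (Y : Ω → B)
    (hX : ∀ s, MeasurableSet (X ⁻¹' {s})) (hY : ∀ s, MeasurableSet (Y ⁻¹' {s}))
    (g : A → B) (h : B → A) (hg : ∀ ω, g (X ω) = Y ω) (hh : ∀ ω, h (Y ω) = X ω) :
    Hent μ X = Hent μ Y := by
  have h1 : Hent μ (fun ω => g (X ω)) = Hent μ Y := by
    congr 1; funext ω; exact hg ω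
  have h2 : Hent μ (fun ω => h (Y ω)) = Hent μ X := by
    congr 1; funext ω; exact hh ω
  have l1 := hent_comp_le μ X hX g
  have l2 := hent_comp_le μ Y hY h
  rw [h1] at l1; rw [h2] at l2
  linarith

lemma sum_prod3 {A B C M : Type*} [Fintype A] [Fintype B] [Fintype C] [AddCommMonoid M]
    (F : A × B × C → M) : ∑ s : A × B × C, F s = ∑ a, ∑ b, ∑ c, F (a, b, c) := by
  rw [Fintype.sum_prod_type]
  exact Finset.sum_congr rfl fun a _ => Fintype.sum_prod_type _

lemma submod_hent {Ω A B C : Type*} [MeasurableSpace Ω] [Fintype A] [Fintype B] [Fintype C]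
    (μ : Measure Ω) [IsProbabilityMeasure μ] (X : Ω → A) (Y : Ω → B) (Z : Ω → C)
    (hXYZ : ∀ s, MeasurableSet ((fun ω => (X ω, Y ω, Z ω)) ⁻¹' {s})) :
    Hent μ (fun ω => (X ω, Y ω, Z ω)) + Hent μ Y
      ≤ Hent μ (fun ω => (X ω, Y ω)) + Hent μ (fun ω => (Y ω, Z ω)) := by
  classical
  set XYZ : Ω → A × B × C := fun ω => (X ω, Y ω, Z ω) with hXYZdef
  set p : A → B → C → ℝ := fun a b c => (μ (XYZ ⁻¹' {(a, b, c)})).toReal with hpdef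
  have hp0 : ∀ a b c, 0 ≤ p a b c := fun _ _ _ => ENNReal.toReal_nonneg
  have hptot : ∑ a, ∑ b, ∑ c, p a b c = 1 := by
    have h1 : ∑ s : A × B × C, μ (XYZ ⁻¹' {s}) = 1 := by
      have := sum_measure_preimage_singleton (μ := μ) (f := XYZ) Finset.univ
        (fun s _ => hXYZ s)
      simpa using this
    have h2 : ∑ s : A × B × C, (μ (XYZ ⁻¹' {s})).toReal = 1 := by
      rw [← ENNReal.toReal_sum (fun s _ => measure_ne_top μ _), h1, ENNReal.toReal_one]
    rw [← h2, sum_prod3]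
  have eXYZ : Hent μ XYZ = ∑ a, ∑ b, ∑ c, negMulLog (p a b c) := by
    rw [Hent, sum_prod3 (fun s => negMulLog (μ (XYZ ⁻¹' {s})).toReal)]
  have eXY : Hent μ (fun ω => (X ω, Y ω)) = ∑ a, ∑ b, negMulLog (∑ c, p a b c) := by
    rw [Hent, Fintype.sum_prod_type]
    refine Finset.sum_congr rfl fun a _ => Finset.sum_congr rfl fun b _ => ?_
    congr 1
    rw [show (fun ω => (X ω, Y ω)) = (fun ω => ((XYZ ω).1, (XYZ ω).2.1)) from rfl,
      measure_comp_toReal μ XYZ hXYZ (fun s => (s.1, s.2.1)) (a, b)]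
    rw [Finset.sum_filter, sum_prod3]
    simp [hpdef, Prod.mk.injEq, ite_and, Finset.sum_ite_irrel, Finset.sum_const_zero,
      Finset.sum_ite_eq, Finset.sum_ite_eq']
  have eY : Hent μ Y = ∑ b, negMulLog (∑ a, ∑ c, p a b c) := by
    rw [Hent]
    refine Finset.sum_congr rfl fun b _ => ?_
    congr 1
    rw [show Y = (fun ω => (XYZ ω).2.1) from rfl,
      measure_comp_toReal μ XYZ hXYZ (fun s => s.2.1) b]
    rw [Finset.sum_filter, sum_prod3]
    refine Finset.sum_congr rfl fun x _ => ?_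
    rw [Finset.sum_comm]
    simp [hpdef, Finset.sum_ite_irrel, Finset.sum_const_zero, Finset.sum_ite_eq,
      Finset.sum_ite_eq']
  have eYZ : Hent μ (fun ω => (Y ω, Z ω)) = ∑ b, ∑ c, negMulLog (∑ a, p a b c) := by
    rw [Hent, Fintype.sum_prod_type]
    refine Finset.sum_congr rfl fun b _ => Finset.sum_congr rfl fun c _ => ?_
    congr 1
    rw [show (fun ω => (Y ω, Z ω)) = (fun ω => (XYZ ω).2) from rfl,
      measure_comp_toReal μ XYZ hXYZ (fun s => s.2) (b, c)]
    rw [Finset.sum_filter, sum_prod3]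
    simp [hpdef, Prod.mk.injEq, ite_and, Finset.sum_ite_irrel, Finset.sum_const_zero,
      Finset.sum_ite_eq, Finset.sum_ite_eq']
  rw [eXYZ, eXY, eY, eYZ]
  exact submod_real p hp0 hptot

lemma card_fiber {K D : ℕ} (hK : 1 ≤ K) (hKD : K ≤ D)
    (Q : Finset (Fin K → Fin D)) (hQ : ∀ d, d ∈ Q ↔ Function.Injective d)
    (k : Fin K) (i : Fin D) :
    (Q.filter (fun d => d k = i)).card = (D - 1).descFactorial (K - 1) := by
  classical
  have hD : 1 ≤ D := le_trans hK hKD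
  have hQcard : Q.card = D.descFactorial K := by
    have h1 : Q = Finset.univ.filter (fun d => Function.Injective d) := by
      ext d; simp [hQ]
    rw [h1, ← Fintype.card_subtype]
    rw [Fintype.card_congr (Equiv.subtypeInjectiveEquivEmbedding (Fin K) (Fin D))]
    rw [Fintype.card_embedding_eq]
    simp
  -- all fibers (over i) have the same cardinality
  have hfib : ∀ j : Fin D, (Q.filter (fun d => d k = j)).card = (Q.filter (fun d => d k = i)).card := by
    intro j
    refine Finset.card_bij' (fun d _ => (Equiv.swap j i) ∘ d) (fun d _ => (Equiv.swap j i) ∘ d)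
      ?_ ?_ ?_ ?_
    · intro d hd
      rw [Finset.mem_filter] at hd ⊢
      refine ⟨(hQ _).2 ((Equiv.swap j i).injective.comp ((hQ d).1 hd.1)), ?_⟩
      simp [Function.comp, hd.2]
    · intro d hd
      rw [Finset.mem_filter] at hd ⊢
      refine ⟨(hQ _).2 ((Equiv.swap j i).injective.comp ((hQ d).1 hd.1)), ?_⟩
      simp [Function.comp, hd.2, Equiv.swap_apply_right]
    · intro d _; funext x; simp
    · intro d _; funext x; simp
  have hsum : ∑ j : Fin D, (Q.filter (fun d => d k = j)).card = Q.card :=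
    (Finset.card_eq_sum_card_fiberwise (fun d _ => Finset.mem_univ (d k))).symm
  have hDm : D * (Q.filter (fun d => d k = i)).card = D * (D - 1).descFactorial (K - 1) := by
    calc D * (Q.filter (fun d => d k = i)).card
        = ∑ j : Fin D, (Q.filter (fun d => d k = i)).card := by
          rw [Finset.sum_const, Finset.card_univ, Fintype.card_fin, smul_eq_mul]
      _ = ∑ j : Fin D, (Q.filter (fun d => d k = j)).card :=
          Finset.sum_congr rfl fun j _ => (hfib j).symm
      _ = Q.card := hsum
      _ = D.descFactorial K := hQcard
      _ = D * (D - 1).descFactorial (K - 1) := by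
          obtain ⟨D', rfl⟩ : ∃ D', D = D' + 1 := ⟨D - 1, (Nat.succ_pred_eq_of_pos hD).symm⟩
          obtain ⟨K', rfl⟩ : ∃ K', K = K' + 1 := ⟨K - 1, (Nat.succ_pred_eq_of_pos hK).symm⟩
          simp only [Nat.add_sub_cancel, Nat.succ_descFactorial_succ]
  exact Nat.eq_of_mul_eq_mul_left (lt_of_lt_of_le Nat.zero_lt_one hD) hDm

lemma const_eq {K D : ℕ} (hK : 1 ≤ K) (hKD : K ≤ D) :
    ((K : ℝ) / (D : ℝ)) * (Nat.factorial K : ℝ) * (Nat.choose D K : ℝ)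
      = (K : ℝ) * ((D - 1).descFactorial (K - 1) : ℝ) := by
  have hD : 1 ≤ D := le_trans hK hKD
  have h1 : (K.factorial * D.choose K : ℕ) = D * (D - 1).descFactorial (K - 1) := by
    rw [← Nat.descFactorial_eq_factorial_mul_choose]
    obtain ⟨D', rfl⟩ : ∃ D', D = D' + 1 := ⟨D - 1, (Nat.succ_pred_eq_of_pos hD).symm⟩
    obtain ⟨K', rfl⟩ : ∃ K', K = K' + 1 := ⟨K - 1, (Nat.succ_pred_eq_of_pos hK).symm⟩
    simp only [Nat.add_sub_cancel, Nat.succ_descFactorial_succ]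
  have hDne : (D : ℝ) ≠ 0 := Nat.cast_ne_zero.2 (by omega)
  have h2 : (K.factorial : ℝ) * (D.choose K : ℝ) = (D : ℝ) * ((D - 1).descFactorial (K - 1) : ℝ) := by
    exact_mod_cast congrArg (Nat.cast (R := ℝ)) h1
  field_simp
  nlinarith [h2]

variable {Ω : Type*} [MeasurableSpace Ω] {D : ℕ} {S : Fin D → Type*} {T : Type*}

def hanE (W : ∀ d : Fin D, Ω → S d) (A : Finset (Fin D)) (ω : Ω) : ∀ d, Option (S d) :=
  fun d => if d ∈ A then some (W d ω) else none

noncomputable def hanF [∀ d, Fintype (S d)] [Fintype T]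
    (μ : Measure Ω) (W : ∀ d : Fin D, Ω → S d) (V : Ω → T) (A : Finset (Fin D)) : ℝ :=
  Hent μ (fun ω => (hanE W A ω, V ω))

section
variable [∀ d, Fintype (S d)] [∀ d, DecidableEq (S d)] [Fintype T]
  (μ : Measure Ω) [IsProbabilityMeasure μ]
  (W : ∀ d : Fin D, Ω → S d) (V : Ω → T)

lemma hanE_meas (hJ : ∀ s, MeasurableSet ((fun ω => ((fun d => W d ω : ∀ d, S d), V ω)) ⁻¹' {s}))
    (A : Finset (Fin D)) (s : (∀ d, Option (S d)) × T) :
    MeasurableSet ((fun ω => (hanE W A ω, V ω)) ⁻¹' {s}) :=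
  meas_comp hJ (fun m => ((fun d => if d ∈ A then some (m.1 d) else none), m.2)) s

lemma hanF_submod (hJ : ∀ s, MeasurableSet ((fun ω => ((fun d => W d ω : ∀ d, S d), V ω)) ⁻¹' {s}))
    (A B : Finset (Fin D)) :
    hanF μ W V (A ∪ B) + hanF μ W V (A ∩ B) ≤ hanF μ W V A + hanF μ W V B := by
  classical
  set X : Ω → (∀ d, Option (S d)) := hanE W (A \ B) with hX
  set Y : Ω → ((∀ d, Option (S d)) × T) := fun ω => (hanE W (A ∩ B) ω, V ω) with hY
  set Z : Ω → (∀ d, Option (S d)) := hanE W (B \ A) with hZ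
  have hXYZmeas : ∀ s, MeasurableSet ((fun ω => (X ω, Y ω, Z ω)) ⁻¹' {s}) :=
    fun s => meas_comp hJ (fun m =>
      ((fun d => if d ∈ A \ B then some (m.1 d) else none),
        ((fun d => if d ∈ A ∩ B then some (m.1 d) else none), m.2),
        (fun d => if d ∈ B \ A then some (m.1 d) else none))) s
  have key := submod_hent μ X Y Z hXYZmeas
  -- identify the four entropies
  have e1 : Hent μ (fun ω => (X ω, Y ω, Z ω)) = hanF μ W V (A ∪ B) := by
    refine hent_eq_of_comp μ _ _ hXYZmeas (hanE_meas W V hJ (A ∪ B))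
      (fun m => ((fun d => if d ∈ A then (if d ∈ B then m.2.1.1 d else m.1 d)
          else (if d ∈ B then m.2.2 d else none)), m.2.1.2))
      (fun m => ((fun d => if d ∈ A \ B then m.1 d else none),
        ((fun d => if d ∈ A ∩ B then m.1 d else none), m.2),
        (fun d => if d ∈ B \ A then m.1 d else none)))
      ?_ ?_
    · intro ω
      refine Prod.ext (funext fun d => ?_) ?_ <;> first
        | rfl
        | (by_cases hA : d ∈ A <;> by_cases hB : d ∈ B <;> simp [hX, hY, hZ, hanE, hA, hB])
    · intro ω
      refine Prod.ext (funext fun d => ?_) (Prod.ext (Prod.ext (funext fun d => ?_) ?_) (funext fun d => ?_)) <;> first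
        | rfl
        | (by_cases hA : d ∈ A <;> by_cases hB : d ∈ B <;> simp [hX, hY, hZ, hanE, hA, hB])
  have e2 : Hent μ (fun ω => (X ω, Y ω)) = hanF μ W V A := by
    refine hent_eq_of_comp μ _ _
      (fun s => meas_comp hJ (fun m =>
        ((fun d => if d ∈ A \ B then some (m.1 d) else none),
          ((fun d => if d ∈ A ∩ B then some (m.1 d) else none), m.2))) s)
      (hanE_meas W V hJ A)
      (fun m => ((fun d => if d ∈ B then m.2.1 d else m.1 d), m.2.2))
      (fun m => ((fun d => if d ∈ A \ B then m.1 d else none),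
        ((fun d => if d ∈ A ∩ B then m.1 d else none), m.2)))
      ?_ ?_
    · intro ω
      refine Prod.ext (funext fun d => ?_) ?_ <;> first
        | rfl
        | (by_cases hA : d ∈ A <;> by_cases hB : d ∈ B <;> simp [hX, hY, hZ, hanE, hA, hB])
    · intro ω
      refine Prod.ext (funext fun d => ?_) (Prod.ext (funext fun d => ?_) ?_) <;> first
        | rfl
        | (by_cases hA : d ∈ A <;> by_cases hB : d ∈ B <;> simp [hX, hY, hZ, hanE, hA, hB])
  have e3 : Hent μ (fun ω => (Y ω, Z ω)) = hanF μ W V B := by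
    refine hent_eq_of_comp μ _ _
      (fun s => meas_comp hJ (fun m =>
        (((fun d => if d ∈ A ∩ B then some (m.1 d) else none), m.2),
          (fun d => if d ∈ B \ A then some (m.1 d) else none))) s)
      (hanE_meas W V hJ B)
      (fun m => ((fun d => if d ∈ A then m.1.1 d else m.2 d), m.1.2))
      (fun m => (((fun d => if d ∈ A ∩ B then m.1 d else none), m.2),
        (fun d => if d ∈ B \ A then m.1 d else none)))
      ?_ ?_
    · intro ω
      refine Prod.ext (funext fun d => ?_) ?_ <;> first
        | rfl
        | (by_cases hA : d ∈ A <;> by_cases hB : d ∈ B <;> simp [hX, hY, hZ, hanE, hA, hB])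
    · intro ω
      refine Prod.ext (Prod.ext (funext fun d => ?_) ?_) (funext fun d => ?_) <;> first
        | rfl
        | (by_cases hA : d ∈ A <;> by_cases hB : d ∈ B <;> simp [hX, hY, hZ, hanE, hA, hB])
  have e4 : Hent μ Y = hanF μ W V (A ∩ B) := rfl
  rw [e1, e2, e3, e4] at key
  exact key

lemma hanF_chain (hJ : ∀ s, MeasurableSet ((fun ω => ((fun d => W d ω : ∀ d, S d), V ω)) ⁻¹' {s}))
    (A : Finset (Fin D)) :
    (∑ a ∈ A, (hanF μ W V (Finset.univ.filter (fun i : Fin D => (i : ℕ) < (a : ℕ) + 1))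
      - hanF μ W V (Finset.univ.filter (fun i : Fin D => (i : ℕ) < (a : ℕ)))))
      ≤ hanF μ W V A - hanF μ W V ∅ := by
  classical
  induction A using Finset.induction_on_max with
  | empty => simp
  | insert a A hlt IH =>
    have ha : a ∉ A := fun h => lt_irrefl a (hlt a h)
    have hU1 : insert a A ∪ Finset.univ.filter (fun i : Fin D => (i : ℕ) < (a : ℕ))
        = Finset.univ.filter (fun i : Fin D => (i : ℕ) < (a : ℕ) + 1) := by
      ext i
      simp only [Finset.mem_union, Finset.mem_insert, Finset.mem_filter, Finset.mem_univ, true_and]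
      constructor
      · rintro ((rfl | hi) | hi)
        · omega
        · have := hlt i hi
          rw [Fin.lt_def] at this
          omega
        · omega
      · intro hi
        rcases Nat.lt_succ_iff_lt_or_eq.1 hi with h | h
        · right; exact h
        · left; left; exact Fin.ext h
    have hU2 : (insert a A) ∩ Finset.univ.filter (fun i : Fin D => (i : ℕ) < (a : ℕ)) = A := by
      ext i
      simp only [Finset.mem_inter, Finset.mem_insert, Finset.mem_filter, Finset.mem_univ, true_and]
      constructor
      · rintro ⟨rfl | hi, hlt'⟩
        · omega
        · exact hi
      · intro hi
        have := hlt i hi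
        rw [Fin.lt_def] at this
        exact ⟨Or.inr hi, this⟩
    have hsub := hanF_submod μ W V hJ (insert a A)
      (Finset.univ.filter (fun i : Fin D => (i : ℕ) < (a : ℕ)))
    rw [hU1, hU2] at hsub
    rw [Finset.sum_insert ha]
    linarith


lemma hent_V_eq (hJ : ∀ s, MeasurableSet ((fun ω => ((fun d => W d ω : ∀ d, S d), V ω)) ⁻¹' {s})) :
    Hent μ V = hanF μ W V ∅ := by
  refine hent_eq_of_comp μ V _ (fun s => meas_comp hJ (fun m => m.2) s) (hanE_meas W V hJ ∅)
    (fun t => ((fun d => none), t)) (fun m => m.2) ?_ ?_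
  · intro ω
    refine Prod.ext (funext fun d => ?_) rfl
    simp [hanE]
  · intro ω; rfl

lemma hent_full_eq (hJ : ∀ s, MeasurableSet ((fun ω => ((fun d => W d ω : ∀ d, S d), V ω)) ⁻¹' {s}))
    (ω₀ : Ω) :
    Hent μ (fun ω => ((fun d => W d ω : ∀ d, S d), V ω)) = hanF μ W V Finset.univ := by
  refine hent_eq_of_comp μ _ _ hJ (hanE_meas W V hJ Finset.univ)
    (fun m => ((fun d => some (m.1 d)), m.2))
    (fun m => ((fun d => (m.1 d).getD (W d ω₀)), m.2)) ?_ ?_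
  · intro ω
    refine Prod.ext (funext fun d => ?_) rfl
    simp [hanE]
  · intro ω
    refine Prod.ext (funext fun d => ?_) rfl
    simp [hanE]

lemma hent_tuple_eq (hJ : ∀ s, MeasurableSet ((fun ω => ((fun d => W d ω : ∀ d, S d), V ω)) ⁻¹' {s}))
    (ω₀ : Ω) {K : ℕ} (d : Fin K → Fin D) (hinj : Function.Injective d) :
    Hent μ (fun ω => ((fun k => W (d k) ω : ∀ k, S (d k)), V ω))
      = hanF μ W V (Finset.univ.image d) := by
  classical
  refine hent_eq_of_comp μ _ _ (fun s => meas_comp hJ (fun m => ((fun k => m.1 (d k)), m.2)) s)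
    (hanE_meas W V hJ _)
    (fun m => ((fun i => if h : ∃ k, d k = i then some (h.choose_spec ▸ m.1 h.choose) else none), m.2))
    (fun m => ((fun k => (m.1 (d k)).getD (W (d k) ω₀)), m.2)) ?_ ?_
  · intro ω
    refine Prod.ext (funext fun i => ?_) rfl
    show (if h : ∃ k, d k = i then some (h.choose_spec ▸ W (d h.choose) ω) else none)
      = hanE W (Finset.univ.image d) ω i
    by_cases hex : ∃ k, d k = i
    · rw [dif_pos hex]
      have hmem : i ∈ Finset.univ.image d :=
        Finset.mem_image.2 ⟨hex.choose, Finset.mem_univ _, hex.choose_spec⟩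
      have hE : hanE W (Finset.univ.image d) ω i = some (W i ω) := by simp [hanE, hmem]
      rw [hE]
      have hkey : ∀ (j : Fin D) (hj : d hex.choose = j), (hj ▸ (W (d hex.choose) ω) : S j) = W j ω := by
        rintro j rfl; rfl
      exact congrArg some (hkey i hex.choose_spec)
    · rw [dif_neg hex]
      have hmem : i ∉ Finset.univ.image d := by
        simp only [Finset.mem_image]; rintro ⟨k, -, hk⟩; exact hex ⟨k, hk⟩
      simp [hanE, hmem]
  · intro ω
    refine Prod.ext (funext fun k => ?_) rfl
    have hE : hanE W (Finset.univ.image d) ω (d k) = some (W (d k) ω) := by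
      simp [hanE, Finset.mem_image.2 ⟨k, Finset.mem_univ _, rfl⟩]
    show (hanE W (Finset.univ.image d) ω (d k)).getD (W (d k) ω₀) = W (d k) ω
    rw [hE]
    rfl

end
end HanAux


theorem han_type_inequality
    {Ω : Type*} [MeasurableSpace Ω] (μ : Measure Ω) [IsProbabilityMeasure μ]
    (K D : ℕ) (hK : 1 ≤ K) (hKD : K ≤ D)
    {S : Fin D → Type*} [∀ d, Fintype (S d)]
    [∀ d, MeasurableSpace (S d)] [∀ d, MeasurableSingletonClass (S d)]
    (W : ∀ d : Fin D, Ω → S d) (hWmeas : ∀ d, Measurable (W d))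
    {T : Type*} [Fintype T] [MeasurableSpace T] [MeasurableSingletonClass T]
    (V : Ω → T) (hV : Measurable V)
    (Q : Finset (Fin K → Fin D)) (hQ : ∀ d, d ∈ Q ↔ Function.Injective d) :
    (∑ d ∈ Q, condHent μ (fun ω => fun k : Fin K => W (d k) ω) V) ≥
      ((K : ℝ) / (D : ℝ)) * (Nat.factorial K : ℝ) * (Nat.choose D K : ℝ) *
        condHent μ (fun ω => fun d : Fin D => W d ω) V := by
  classical
  have hΩ : Nonempty Ω := by
    by_contra h
    rw [not_nonempty_iff] at h
    have h1 : (Set.univ : Set Ω) = ∅ := Set.univ_eq_empty_iff.2 h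
    have h2 := measure_univ (μ := μ)
    rw [h1] at h2
    simp at h2
  obtain ⟨ω₀⟩ := hΩ
  have hJ : ∀ s : (∀ d, S d) × T,
      MeasurableSet ((fun ω => ((fun d => W d ω : ∀ d, S d), V ω)) ⁻¹' {s}) := by
    rintro ⟨x, t⟩
    have hset : (fun ω => ((fun d => W d ω : ∀ d, S d), V ω)) ⁻¹' {(x, t)}
        = (⋂ d, W d ⁻¹' {x d}) ∩ V ⁻¹' {t} := by
      ext ω
      simp [Prod.ext_iff, funext_iff]
    rw [hset]
    exact (MeasurableSet.iInter (fun d => hWmeas d (measurableSet_singleton _))).inter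
      (hV (measurableSet_singleton _))
  set F : Finset (Fin D) → ℝ := hanF μ W V with hF
  set c : Fin D → ℝ := fun i =>
    F (Finset.univ.filter fun j : Fin D => (j : ℕ) < (i : ℕ) + 1)
      - F (Finset.univ.filter fun j : Fin D => (j : ℕ) < (i : ℕ)) with hc
  have htel : ∑ i : Fin D, c i = F Finset.univ - F ∅ := by
    have h1 : ∑ i : Fin D, c i
        = F (Finset.univ.filter fun j : Fin D => (j : ℕ) < D)
          - F (Finset.univ.filter fun j : Fin D => (j : ℕ) < 0) :=
      (Fin.sum_univ_eq_sum_range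
        (fun n : ℕ => F (Finset.univ.filter fun j : Fin D => (j : ℕ) < n + 1)
          - F (Finset.univ.filter fun j : Fin D => (j : ℕ) < n)) D).trans
        (Finset.sum_range_sub (fun n : ℕ => F (Finset.univ.filter fun j : Fin D => (j : ℕ) < n)) D)
    have hDfil : (Finset.univ.filter fun j : Fin D => (j : ℕ) < D) = Finset.univ := by
      ext j; simp [j.isLt]
    have h0fil : (Finset.univ.filter fun j : Fin D => (j : ℕ) < 0) = (∅ : Finset (Fin D)) := by
      ext j; simp
    rw [hDfil, h0fil] at h1
    exact h1
  have hperd : ∀ d ∈ Q, (∑ k : Fin K, c (d k))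
      ≤ condHent μ (fun ω => fun k : Fin K => W (d k) ω) V := by
    intro d hd
    have hinj := (hQ d).1 hd
    have h1 : condHent μ (fun ω => fun k : Fin K => W (d k) ω) V
        = F (Finset.univ.image d) - F ∅ := by
      simp only [condHent]
      rw [hent_tuple_eq μ W V hJ ω₀ d hinj, hent_V_eq μ W V hJ]
    rw [h1]
    have h2 : (∑ a ∈ Finset.univ.image d, c a) ≤ F (Finset.univ.image d) - F ∅ :=
      hanF_chain μ W V hJ (Finset.univ.image d)
    have h3 : ∑ a ∈ Finset.univ.image d, c a = ∑ k : Fin K, c (d k) :=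
      Finset.sum_image (fun x _ y _ h => hinj h)
    rw [← h3]
    exact h2
  have hQsum : (K : ℝ) * (((D - 1).descFactorial (K - 1) : ℕ) : ℝ) * (F Finset.univ - F ∅)
      ≤ ∑ d ∈ Q, condHent μ (fun ω => fun k : Fin K => W (d k) ω) V := by
    calc (K : ℝ) * (((D - 1).descFactorial (K - 1) : ℕ) : ℝ) * (F Finset.univ - F ∅)
        = ∑ _k : Fin K, (((D - 1).descFactorial (K - 1) : ℕ) : ℝ) * (F Finset.univ - F ∅) := by
          rw [Finset.sum_const, Finset.card_univ, Fintype.card_fin, nsmul_eq_mul]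
          ring
      _ = ∑ k : Fin K, ∑ i : Fin D, (((D - 1).descFactorial (K - 1) : ℕ) : ℝ) * c i := by
          refine Finset.sum_congr rfl fun k _ => ?_
          rw [← Finset.mul_sum, htel]
      _ = ∑ k : Fin K, ∑ d ∈ Q, c (d k) := by
          refine Finset.sum_congr rfl fun k _ => ?_
          rw [← Finset.sum_fiberwise Q (fun d => d k) (fun d => c (d k))]
          refine Finset.sum_congr rfl fun i _ => ?_
          have hcc : ∑ d ∈ Q.filter (fun d => d k = i), c (d k)
              = ∑ d ∈ Q.filter (fun d => d k = i), c i :=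
            Finset.sum_congr rfl (fun d hd => by rw [(Finset.mem_filter.1 hd).2])
          rw [hcc, Finset.sum_const, card_fiber hK hKD Q hQ k i, nsmul_eq_mul]
      _ = ∑ d ∈ Q, ∑ k : Fin K, c (d k) := Finset.sum_comm
      _ ≤ ∑ d ∈ Q, condHent μ (fun ω => fun k : Fin K => W (d k) ω) V :=
          Finset.sum_le_sum hperd
  have hfull : condHent μ (fun ω => fun d : Fin D => W d ω) V = F Finset.univ - F ∅ := by
    simp only [condHent]
    rw [hent_full_eq μ W V hJ ω₀, hent_V_eq μ W V hJ]
  rw [ge_iff_le, hfull, const_eq hK hKD]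
  exact hQsum
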